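/- Let s be a real Gaussian random variable with variance σ² and density f. Suppose t ∈ R, p ∈ (0, 1/e], ε ∈ (0, σ√(ln(1/p))] satisfy Pr[s ≥ t-ε] ≥ p and Pr[s ≤ t] ≥ p. Then for any x_1, x_2 ∈ [t - 4σ√(ln(1/p)), t + 4σ√(ln(1/p))], we have f(x_1)/f(x_2) ≤ exp(8σ^{-1}√(ln(1/p)) · |x_1 - x_2|). -/

import Mathlib

open MeasureTheory ProbabilityTheory Real Filter

lemma my_hasDerivAt_E (m S : ℝ) (hS : 0 < S) (x : ℝ) :
    HasDerivAt (fun y => -(y - m) ^ 2 / (2 * S ^ 2)) ((m - x) / S ^ 2) x := by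
  have h1 : HasDerivAt (fun y : ℝ => (y - m) ^ 2) (2 * (x - m)) x := by
    simpa using ((hasDerivAt_id x).sub_const m).fun_pow 2
  have := (h1.fun_neg).div_const (2 * S ^ 2)
  refine this.congr_deriv ?_
  field_simp
  ring

lemma my_integrable_shift (m S : ℝ) (hS : 0 < S) :
    Integrable (fun x : ℝ => (x - m) * Real.exp (-(x - m) ^ 2 / (2 * S ^ 2))) := by
  have hb : 0 < (2 * S ^ 2)⁻¹ := by positivity
  have I1 := integrable_mul_exp_neg_mul_sq hb
  have I2 := I1.comp_sub_right m
  refine I2.congr ?_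
  filter_upwards with x
  congr 1
  ring

lemma my_integrable_exp (m S : ℝ) (hS : 0 < S) :
    Integrable (fun x : ℝ => Real.exp (-(x - m) ^ 2 / (2 * S ^ 2))) := by
  have hb : 0 < (2 * S ^ 2)⁻¹ := by positivity
  have I1 := integrable_exp_neg_mul_sq hb
  have I2 := I1.comp_sub_right m
  refine I2.congr ?_
  filter_upwards with x
  congr 1
  ring

lemma my_tendsto_E_atBot (m S : ℝ) (hS : 0 < S) :
    Tendsto (fun x : ℝ => -(x - m) ^ 2 / (2 * S ^ 2)) atBot atBot := by
  have habs : Tendsto (fun x : ℝ => |x - m|) atBot atTop :=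
    tendsto_abs_atBot_atTop.comp (tendsto_atBot_add_const_right atBot (-m) tendsto_id)
  have hsq : Tendsto (fun x : ℝ => (x - m) ^ 2) atBot atTop := by
    refine Tendsto.congr (fun x => ?_) ((tendsto_pow_atTop (two_ne_zero)).comp habs)
    simp [sq_abs]
  have hdiv : Tendsto (fun x : ℝ => (x - m) ^ 2 / (2 * S ^ 2)) atBot atTop :=
    hsq.atTop_div_const (by positivity)
  refine Tendsto.congr (fun x => ?_) (tendsto_neg_atTop_atBot.comp hdiv)
  simp [neg_div]

lemma my_tendsto_E_atTop (m S : ℝ) (hS : 0 < S) :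
    Tendsto (fun x : ℝ => -(x - m) ^ 2 / (2 * S ^ 2)) atTop atBot := by
  have habs : Tendsto (fun x : ℝ => |x - m|) atTop atTop :=
    tendsto_abs_atTop_atTop.comp (tendsto_atTop_add_const_right atTop (-m) tendsto_id)
  have hsq : Tendsto (fun x : ℝ => (x - m) ^ 2) atTop atTop := by
    refine Tendsto.congr (fun x => ?_) ((tendsto_pow_atTop (two_ne_zero)).comp habs)
    simp [sq_abs]
  have hdiv : Tendsto (fun x : ℝ => (x - m) ^ 2 / (2 * S ^ 2)) atTop atTop :=
    hsq.atTop_div_const (by positivity)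
  refine Tendsto.congr (fun x => ?_) (tendsto_neg_atTop_atBot.comp hdiv)
  simp [neg_div]

lemma my_c0_le_one (S : ℝ) (hS : 0 < S) :
    (Real.sqrt (2 * Real.pi * S ^ 2))⁻¹ * S ≤ 1 := by
  have h2π : (1 : ℝ) ≤ 2 * Real.pi := by nlinarith [Real.pi_gt_three]
  have hle : S ≤ Real.sqrt (2 * Real.pi * S ^ 2) := by
    rw [Real.le_sqrt hS.le (by positivity)]
    nlinarith
  have hpos : 0 < Real.sqrt (2 * Real.pi * S ^ 2) := lt_of_lt_of_le hS hle
  rw [inv_mul_eq_div]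
  exact (div_le_one hpos).mpr hle

lemma my_tail_Iic (m S t : ℝ) (hS : 0 < S) (ht : S ≤ m - t) :
    ∫ x in Set.Iic t, (Real.sqrt (2 * Real.pi * S ^ 2))⁻¹ *
        Real.exp (-(x - m) ^ 2 / (2 * S ^ 2)) ≤
      Real.exp (-(m - t) ^ 2 / (2 * S ^ 2)) := by
  set C : ℝ := (Real.sqrt (2 * Real.pi * S ^ 2))⁻¹ with hC
  have hCpos : 0 < C := by
    have : 0 < Real.sqrt (2 * Real.pi * S ^ 2) := by positivity
    positivity
  set g : ℝ → ℝ := fun x => C * S * Real.exp (-(x - m) ^ 2 / (2 * S ^ 2)) with hg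
  set g' : ℝ → ℝ := fun x =>
    C * S * (Real.exp (-(x - m) ^ 2 / (2 * S ^ 2)) * ((m - x) / S ^ 2)) with hg'
  have hderiv : ∀ x, HasDerivAt g (g' x) x := fun x =>
    ((my_hasDerivAt_E m S hS x).exp).const_mul (C * S)
  have hint : IntegrableOn g' (Set.Iic t) := by
    refine Integrable.integrableOn ?_
    have := ((my_integrable_shift m S hS).const_mul (-(C * S / S ^ 2)))
    refine this.congr ?_
    filter_upwards with x
    simp only [hg']
    ring
  have htend : Tendsto g atBot (nhds 0) := by
    have := (Real.tendsto_exp_atBot).comp (my_tendsto_E_atBot m S hS)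
    have h2 := this.const_mul (C * S)
    simpa using h2
  have hFTC : ∫ x in Set.Iic t, g' x = g t - 0 :=
    integral_Iic_of_hasDerivAt_of_tendsto' (fun x _ => hderiv x) hint htend
  have hmono : ∫ x in Set.Iic t, C * Real.exp (-(x - m) ^ 2 / (2 * S ^ 2))
      ≤ ∫ x in Set.Iic t, g' x := by
    refine setIntegral_mono_on ?_ hint measurableSet_Iic ?_
    · exact ((my_integrable_exp m S hS).const_mul C).integrableOn
    · intro x hx
      simp only [hg']
      have hxt : x ≤ t := hx
      have h1 : S ≤ m - x := by linarith
      have hexp : 0 < Real.exp (-(x - m) ^ 2 / (2 * S ^ 2)) := Real.exp_pos _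
      have h2 : (1 : ℝ) ≤ (m - x) / S := by
        rw [le_div_iff₀ hS]; linarith
      calc C * Real.exp (-(x - m) ^ 2 / (2 * S ^ 2))
          = C * S * (Real.exp (-(x - m) ^ 2 / (2 * S ^ 2)) * (1 / S)) := by
            field_simp
        _ ≤ C * S * (Real.exp (-(x - m) ^ 2 / (2 * S ^ 2)) * ((m - x) / S ^ 2)) := by
            have : (1 : ℝ) / S ≤ (m - x) / S ^ 2 := by
              rw [div_le_div_iff₀ hS (by positivity)]
              nlinarith
            have hCS : 0 < C * S := by positivity
            gcongr
  calc ∫ x in Set.Iic t, C * Real.exp (-(x - m) ^ 2 / (2 * S ^ 2))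
      ≤ ∫ x in Set.Iic t, g' x := hmono
    _ = g t - 0 := hFTC
    _ ≤ Real.exp (-(m - t) ^ 2 / (2 * S ^ 2)) := by
        rw [sub_zero]
        simp only [hg]
        have heq : -(t - m) ^ 2 / (2 * S ^ 2) = -(m - t) ^ 2 / (2 * S ^ 2) := by ring
        rw [heq]
        have := my_c0_le_one S hS
        have hexp : 0 ≤ Real.exp (-(m - t) ^ 2 / (2 * S ^ 2)) := (Real.exp_pos _).le
        nlinarith [Real.exp_pos (-(m - t) ^ 2 / (2 * S ^ 2))]

lemma my_tail_Ioi (m S s : ℝ) (hS : 0 < S) (hs : S ≤ s - m) :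
    ∫ x in Set.Ioi s, (Real.sqrt (2 * Real.pi * S ^ 2))⁻¹ *
        Real.exp (-(x - m) ^ 2 / (2 * S ^ 2)) ≤
      Real.exp (-(s - m) ^ 2 / (2 * S ^ 2)) := by
  set C : ℝ := (Real.sqrt (2 * Real.pi * S ^ 2))⁻¹ with hC
  have hCpos : 0 < C := by
    have : 0 < Real.sqrt (2 * Real.pi * S ^ 2) := by positivity
    positivity
  set g : ℝ → ℝ := fun x => -(C * S * Real.exp (-(x - m) ^ 2 / (2 * S ^ 2))) with hg
  set g' : ℝ → ℝ := fun x =>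
    C * S * (Real.exp (-(x - m) ^ 2 / (2 * S ^ 2)) * ((x - m) / S ^ 2)) with hg'
  have hderiv : ∀ x, HasDerivAt g (g' x) x := by
    intro x
    have := (((my_hasDerivAt_E m S hS x).exp).const_mul (C * S)).fun_neg
    refine this.congr_deriv ?_
    simp only [hg']
    ring
  have hint : IntegrableOn g' (Set.Ioi s) := by
    refine Integrable.integrableOn ?_
    have := ((my_integrable_shift m S hS).const_mul (C * S / S ^ 2))
    refine this.congr ?_
    filter_upwards with x
    simp only [hg']
    ring
  have htend : Tendsto g atTop (nhds 0) := by
    have := (Real.tendsto_exp_atBot).comp (my_tendsto_E_atTop m S hS)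
    have h2 := (this.const_mul (C * S)).neg
    simpa using h2
  have hFTC : ∫ x in Set.Ioi s, g' x = 0 - g s :=
    integral_Ioi_of_hasDerivAt_of_tendsto' (fun x _ => hderiv x) hint htend
  have hmono : ∫ x in Set.Ioi s, C * Real.exp (-(x - m) ^ 2 / (2 * S ^ 2))
      ≤ ∫ x in Set.Ioi s, g' x := by
    refine setIntegral_mono_on ?_ hint measurableSet_Ioi ?_
    · exact ((my_integrable_exp m S hS).const_mul C).integrableOn
    · intro x hx
      simp only [hg']
      have hxs : s < x := hx
      have h1 : S ≤ x - m := by linarith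
      calc C * Real.exp (-(x - m) ^ 2 / (2 * S ^ 2))
          = C * S * (Real.exp (-(x - m) ^ 2 / (2 * S ^ 2)) * (1 / S)) := by
            field_simp
        _ ≤ C * S * (Real.exp (-(x - m) ^ 2 / (2 * S ^ 2)) * ((x - m) / S ^ 2)) := by
            have : (1 : ℝ) / S ≤ (x - m) / S ^ 2 := by
              rw [div_le_div_iff₀ hS (by positivity)]
              nlinarith
            have hCS : 0 < C * S := by positivity
            gcongr
  calc ∫ x in Set.Ioi s, C * Real.exp (-(x - m) ^ 2 / (2 * S ^ 2))
      ≤ ∫ x in Set.Ioi s, g' x := hmono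
    _ = 0 - g s := hFTC
    _ ≤ Real.exp (-(s - m) ^ 2 / (2 * S ^ 2)) := by
        simp only [hg, zero_sub, neg_neg]
        have := my_c0_le_one S hS
        nlinarith [Real.exp_pos (-(s - m) ^ 2 / (2 * S ^ 2))]

/-- Gaussian as log-Lipschitz: under the stated conditions on `t, p, ε`, the Gaussian
density `f` with mean `m` and standard deviation `σ` satisfies
`f(x₁)/f(x₂) ≤ exp(8σ⁻¹√(ln p⁻¹)·|x₁-x₂|)` on the interval
`[t - 4σ√(ln p⁻¹), t + 4σ√(ln p⁻¹)]`. -/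
theorem stmt_5 (m : ℝ) (σ : NNReal) (hσ : 0 < σ) (t p ε : ℝ)
    (hp : p ∈ Set.Ioc (0 : ℝ) (Real.exp 1)⁻¹)
    (hε : ε ∈ Set.Ioc (0 : ℝ) ((σ : ℝ) * Real.sqrt (Real.log p⁻¹)))
    (h1 : ENNReal.ofReal p ≤ gaussianReal m (σ ^ 2) {x | t - ε ≤ x})
    (h2 : ENNReal.ofReal p ≤ gaussianReal m (σ ^ 2) {x | x ≤ t})
    (x1 x2 : ℝ)
    (hx1 : x1 ∈ Set.Icc (t - 4 * σ * Real.sqrt (Real.log p⁻¹))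
        (t + 4 * σ * Real.sqrt (Real.log p⁻¹)))
    (hx2 : x2 ∈ Set.Icc (t - 4 * σ * Real.sqrt (Real.log p⁻¹))
        (t + 4 * σ * Real.sqrt (Real.log p⁻¹))) :
    (((σ : ℝ) * Real.sqrt (2 * Real.pi))⁻¹ * Real.exp (-(x1 - m) ^ 2 / (2 * σ ^ 2))) /
        (((σ : ℝ) * Real.sqrt (2 * Real.pi))⁻¹ * Real.exp (-(x2 - m) ^ 2 / (2 * σ ^ 2))) ≤
      Real.exp (8 * (σ : ℝ)⁻¹ * Real.sqrt (Real.log p⁻¹) * |x1 - x2|) := by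
  set S : ℝ := (σ : ℝ) with hSdef
  have hS : 0 < S := hσ
  set L : ℝ := Real.log p⁻¹ with hLdef
  set R : ℝ := Real.sqrt L with hRdef
  have hpp : 0 < p := hp.1
  have hlogp : Real.log p = -L := by
    rw [hLdef, Real.log_inv]; ring
  have hL1 : 1 ≤ L := by
    have := Real.log_le_log hpp hp.2
    rw [Real.log_inv, Real.log_exp] at this
    rw [hLdef, Real.log_inv]
    linarith
  have hR1 : 1 ≤ R := by
    rw [hRdef]
    exact Real.one_le_sqrt.mpr hL1
  have hR2 : R ^ 2 = L := Real.sq_sqrt (by linarith)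
  have hRpos : 0 < R := by linarith
  have hSR : 0 < S * R := mul_pos hS hRpos
  have hv : (σ ^ 2 : NNReal) ≠ 0 := pow_ne_zero 2 hσ.ne'
  have hpdf : gaussianPDFReal m (σ ^ 2)
      = fun x => (Real.sqrt (2 * Real.pi * S ^ 2))⁻¹ * Real.exp (-(x - m) ^ 2 / (2 * S ^ 2)) := by
    funext x
    simp [gaussianPDFReal, hSdef]
  -- Claim 1 : m - t ≤ 2 S R
  have claim1 : m - t ≤ 2 * S * R := by
    by_contra hcon
    push_neg at hcon
    have hS' : S ≤ m - t := by nlinarith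
    have tb := my_tail_Iic m S t hS hS'
    have hmeas : gaussianReal m (σ ^ 2) {x | x ≤ t}
        = ENNReal.ofReal (∫ x in Set.Iic t, gaussianPDFReal m (σ ^ 2) x) := by
      rw [gaussianReal_apply_eq_integral m hv]
      rfl
    rw [hmeas] at h2
    have hint_nonneg : 0 ≤ ∫ x in Set.Iic t, gaussianPDFReal m (σ ^ 2) x :=
      setIntegral_nonneg measurableSet_Iic (fun x _ => gaussianPDFReal_nonneg m _ x)
    have hple : p ≤ ∫ x in Set.Iic t, gaussianPDFReal m (σ ^ 2) x :=
      (ENNReal.ofReal_le_ofReal_iff hint_nonneg).mp h2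
    rw [hpdf] at hple
    have hlt : Real.exp (-(m - t) ^ 2 / (2 * S ^ 2)) < p := by
      rw [← Real.exp_log hpp]
      apply Real.exp_lt_exp.mpr
      rw [hlogp, div_lt_iff₀ (by positivity)]
      have key : 0 < (m - t - 2 * S * R) * (m - t + 2 * S * R) :=
        mul_pos (by linarith) (by linarith)
      nlinarith [key, hR2, sq_nonneg (S * R), sq_nonneg S, mul_pos hS hS]
    linarith [hple, tb]
  -- Claim 2 : (t - ε) - m ≤ 2 S R
  have claim2 : (t - ε) - m ≤ 2 * S * R := by
    by_contra hcon
    push_neg at hcon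
    have hS' : S ≤ (t - ε) - m := by nlinarith
    have tb := my_tail_Ioi m S (t - ε) hS hS'
    have hmeas : gaussianReal m (σ ^ 2) {x | t - ε ≤ x}
        = ENNReal.ofReal (∫ x in Set.Ici (t - ε), gaussianPDFReal m (σ ^ 2) x) := by
      rw [gaussianReal_apply_eq_integral m hv]
      rfl
    rw [hmeas, integral_Ici_eq_integral_Ioi] at h1
    have hint_nonneg : 0 ≤ ∫ x in Set.Ioi (t - ε), gaussianPDFReal m (σ ^ 2) x :=
      setIntegral_nonneg measurableSet_Ioi (fun x _ => gaussianPDFReal_nonneg m _ x)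
    have hple : p ≤ ∫ x in Set.Ioi (t - ε), gaussianPDFReal m (σ ^ 2) x :=
      (ENNReal.ofReal_le_ofReal_iff hint_nonneg).mp h1
    rw [hpdf] at hple
    have hlt : Real.exp (-((t - ε) - m) ^ 2 / (2 * S ^ 2)) < p := by
      rw [← Real.exp_log hpp]
      apply Real.exp_lt_exp.mpr
      rw [hlogp, div_lt_iff₀ (by positivity)]
      have key : 0 < ((t - ε) - m - 2 * S * R) * ((t - ε) - m + 2 * S * R) :=
        mul_pos (by linarith) (by linarith)
      nlinarith [key, hR2, sq_nonneg (S * R), sq_nonneg S, mul_pos hS hS]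
    linarith [hple, tb]
  -- bound |t - m|
  have hεR : ε ≤ S * R := hε.2
  have htm : |t - m| ≤ 3 * S * R := by
    rw [abs_le]
    constructor <;> linarith [hε.1]
  -- bounds on x1, x2
  have hx1m : |x1 - m| ≤ 8 * S * R := by
    rw [abs_le]
    obtain ⟨ha, hb⟩ := hx1
    have := abs_le.mp htm
    constructor <;> linarith [this.1, this.2]
  have hx2m : |x2 - m| ≤ 8 * S * R := by
    rw [abs_le]
    obtain ⟨ha, hb⟩ := hx2
    have := abs_le.mp htm
    constructor <;> linarith [this.1, this.2]
  -- final algebra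
  have hc : ((σ : ℝ) * Real.sqrt (2 * Real.pi))⁻¹ ≠ 0 := by
    have : 0 < (σ : ℝ) * Real.sqrt (2 * Real.pi) := by positivity
    positivity
  rw [mul_div_mul_left _ _ hc, ← Real.exp_sub]
  apply Real.exp_le_exp.mpr
  have key : (x2 - m) ^ 2 - (x1 - m) ^ 2 ≤ |x1 - x2| * (16 * S * R) := by
    calc (x2 - m) ^ 2 - (x1 - m) ^ 2
        = (x2 - x1) * ((x1 - m) + (x2 - m)) := by ring
      _ ≤ |(x2 - x1) * ((x1 - m) + (x2 - m))| := le_abs_self _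
      _ = |x1 - x2| * |(x1 - m) + (x2 - m)| := by
          rw [abs_mul, abs_sub_comm]
      _ ≤ |x1 - x2| * (16 * S * R) := by
          have h := (abs_add_le (x1 - m) (x2 - m)).trans (by linarith : |x1 - m| + |x2 - m| ≤ 16 * S * R)
          exact mul_le_mul_of_nonneg_left h (abs_nonneg _)
  have heq : -(x1 - m) ^ 2 / (2 * S ^ 2) - -(x2 - m) ^ 2 / (2 * S ^ 2)
      = ((x2 - m) ^ 2 - (x1 - m) ^ 2) / (2 * S ^ 2) := by ring
  show -(x1 - m) ^ 2 / (2 * S ^ 2) - -(x2 - m) ^ 2 / (2 * S ^ 2) ≤ 8 * S⁻¹ * R * |x1 - x2|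
  rw [heq, div_le_iff₀ (by positivity)]
  have hrw : 8 * S⁻¹ * R * |x1 - x2| * (2 * S ^ 2) = |x1 - x2| * (16 * S * R) := by
    field_simp
    ring
  linarith [key]
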